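/- Let g ≥ 38 and 2 ≤ l ≤ g-1 be integers, set s = 1/(g+1), x = l·s, y = (l+1)s, z = (l-1)s, and define F, I, L from the gamma function as before. Set T₁ = (l/(l-1))·F(x)·I(z) and T₂ = sqrt((l/(l-1))²F(x)²I(z)² - ((l+1)/(l-1))L(y)I(z)) whenever the expression under the root is nonnegative. Then T₁ - T₂ ≥ 1 + 4(ln 2)·l·x. -/

import Mathlib

noncomputable def F (v : ℝ) : ℝ :=
  (Real.Gamma (1 / 2 + v / 2) / Real.Gamma (1 / 2 - v / 2)) ^ 2 *
    (Real.Gamma (1 - v) / Real.Gamma (1 + v))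

noncomputable def I (v : ℝ) : ℝ :=
  (Real.Gamma (1 - v / 2) / Real.Gamma (1 + v / 2)) ^ 2 *
    (Real.Gamma (1 + v) / Real.Gamma (1 - v))

noncomputable def L (v : ℝ) : ℝ := 1 / I v

open Real Finset Filter

section Aux

noncomputable def Pfac (v : ℝ) (j : ℕ) : ℝ :=
  ((1 + v / 2 + (j : ℝ)) ^ 2 * (1 - v + (j : ℝ))) /
    ((1 - v / 2 + (j : ℝ)) ^ 2 * (1 + v + (j : ℝ)))

lemma Pfac_den_pos {v : ℝ} (h0 : 0 ≤ v) (h1 : v < 1) (j : ℕ) :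
    0 < (1 - v / 2 + (j : ℝ)) ^ 2 * (1 + v + (j : ℝ)) := by
  have hj : (0:ℝ) ≤ j := Nat.cast_nonneg j
  have : (0:ℝ) < 1 - v / 2 + j := by linarith
  nlinarith

lemma Pfac_le_one {v : ℝ} (h0 : 0 ≤ v) (h1 : v < 1) (j : ℕ) : Pfac v j ≤ 1 := by
  have hd := Pfac_den_pos h0 h1 j
  rw [Pfac, div_le_one hd]
  have hj : (0:ℝ) ≤ j := Nat.cast_nonneg j
  nlinarith [pow_nonneg h0 3]

lemma Pfac_nonneg {v : ℝ} (h0 : 0 ≤ v) (h1 : v < 1) (j : ℕ) : 0 ≤ Pfac v j := by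
  have hd := Pfac_den_pos h0 h1 j
  have hj : (0:ℝ) ≤ j := Nat.cast_nonneg j
  have hnum : 0 ≤ (1 + v / 2 + (j : ℝ)) ^ 2 * (1 - v + (j : ℝ)) := by nlinarith
  exact div_nonneg hnum hd.le

lemma Pfac_ge {v : ℝ} (h0 : 0 ≤ v) (h1 : v ≤ 1 / 2) (j : ℕ) :
    1 - 8 / 13 * v ^ 3 / (1 + (j : ℝ)) ^ 3 ≤ Pfac v j := by
  have h1' : v < 1 := by linarith
  have hd := Pfac_den_pos h0 h1' j
  have hj : (0:ℝ) ≤ j := Nat.cast_nonneg j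
  have hK : (1:ℝ) ≤ 1 + (j:ℝ) := by linarith
  have hKp : (0:ℝ) < (1 + (j:ℝ)) ^ 3 := by positivity
  have hv2 : v ^ 2 ≤ 1 / 4 := by nlinarith
  have hK3 : (1 + (j:ℝ)) ≤ (1 + (j:ℝ)) ^ 3 := le_self_pow₀ hK (by norm_num)
  have hKv : (1 + (j:ℝ)) * v ^ 2 ≤ (1 + (j:ℝ)) * (1/4) :=
    mul_le_mul_of_nonneg_left hv2 (by linarith)
  have hdeq : (1 - v / 2 + (j:ℝ)) ^ 2 * (1 + v + (j:ℝ)) =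
      (1 + (j:ℝ)) ^ 3 - 3 / 4 * ((1 + (j:ℝ)) * v ^ 2) + v ^ 3 / 4 := by ring
  have hden : 13 / 16 * (1 + (j:ℝ)) ^ 3 ≤ (1 - v / 2 + (j : ℝ)) ^ 2 * (1 + v + (j : ℝ)) := by
    rw [hdeq]
    nlinarith [pow_nonneg h0 3]
  have key : Pfac v j = 1 - v ^ 3 / 2 / ((1 - v / 2 + (j : ℝ)) ^ 2 * (1 + v + (j : ℝ))) := by
    rw [Pfac, eq_sub_iff_add_eq, ← add_div, div_eq_one_iff_eq hd.ne']
    ring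
  rw [key]
  have h13 : (0:ℝ) < 13 / 16 * (1 + (j:ℝ)) ^ 3 := by positivity
  have hq : v ^ 3 / 2 / ((1 - v / 2 + (j : ℝ)) ^ 2 * (1 + v + (j : ℝ))) ≤
      v ^ 3 / 2 / (13 / 16 * (1 + (j:ℝ)) ^ 3) :=
    div_le_div_of_nonneg_left (by positivity) h13 hden
  have heq2 : v ^ 3 / 2 / (13 / 16 * (1 + (j:ℝ)) ^ 3) = 8 / 13 * v ^ 3 / (1 + (j:ℝ)) ^ 3 := by
    field_simp; ring
  linarith [heq2 ▸ hq]

lemma sum_cube_le : ∀ n : ℕ, ∑ j ∈ range n, (1:ℝ) / (1 + (j:ℝ)) ^ 3 ≤ 3 / 2 := by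
  have key : ∀ n : ℕ, 1 ≤ n → ∑ j ∈ range n, (1:ℝ) / (1 + (j:ℝ)) ^ 3 ≤ 3/2 - 1/(2*(n:ℝ)^2) := by
    intro n hn
    induction n, hn using Nat.le_induction with
    | base => simp; norm_num
    | succ n hn ih =>
      rw [Finset.sum_range_succ]
      have hn' : (1:ℝ) ≤ (n:ℝ) := by exact_mod_cast hn
      have h1 : (0:ℝ) < (n:ℝ) := by linarith
      have h2 : (0:ℝ) < (n:ℝ) + 1 := by linarith
      have step : (1:ℝ) / (1 + (n:ℝ)) ^ 3 ≤ 1/(2*(n:ℝ)^2) - 1/(2*((n:ℝ)+1)^2) := by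
        rw [div_sub_div _ _ (by positivity) (by positivity),
          div_le_div_iff₀ (by positivity) (by positivity)]
        nlinarith
      push_cast
      linarith
  intro n
  rcases Nat.eq_zero_or_pos n with h | h
  · simp [h]; norm_num
  · have h1 := key n h
    have h2 : (0:ℝ) < 1/(2*(n:ℝ)^2) := by
      have : (0:ℝ) < (n:ℝ) := by exact_mod_cast h
      positivity
    linarith

lemma prod_one_sub_ge (f : ℕ → ℝ) (h0 : ∀ j, 0 ≤ f j) (h1 : ∀ j, f j ≤ 1) :
    ∀ n : ℕ, 1 - ∑ j ∈ range n, f j ≤ ∏ j ∈ range n, (1 - f j) := by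
  intro n
  induction n with
  | zero => simp
  | succ n ih =>
    rw [Finset.prod_range_succ, Finset.sum_range_succ]
    have hs : 0 ≤ ∑ j ∈ range n, f j := Finset.sum_nonneg fun j _ => h0 j
    nlinarith [h0 n, h1 n, ih, hs]

lemma GammaSeq_div (a b : ℝ) (ha : 0 < a) (hb : 0 < b) (n : ℕ) (hn : 1 ≤ n) :
    Real.GammaSeq a n / Real.GammaSeq b n =
      (n:ℝ) ^ (a - b) * ((∏ j ∈ range (n+1), (b + (j:ℝ))) / (∏ j ∈ range (n+1), (a + (j:ℝ)))) := by
  have hnp : (0:ℝ) < (n:ℝ) := by exact_mod_cast hn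
  have hPa : (0:ℝ) < ∏ j ∈ range (n+1), (a + (j:ℝ)) :=
    Finset.prod_pos fun j _ => by positivity
  have hPb : (0:ℝ) < ∏ j ∈ range (n+1), (b + (j:ℝ)) :=
    Finset.prod_pos fun j _ => by positivity
  have hfac : (0:ℝ) < (n.factorial : ℝ) := by exact_mod_cast n.factorial_pos
  rw [Real.GammaSeq, Real.GammaSeq, Real.rpow_sub hnp]
  field_simp

lemma prod_eq_GammaSeq (v : ℝ) (h0 : 0 < v) (h1 : v < 1) (n : ℕ) (hn : 1 ≤ n) :
    (Real.GammaSeq (1 - v/2) n / Real.GammaSeq (1 + v/2) n) ^ 2 *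
      (Real.GammaSeq (1 + v) n / Real.GammaSeq (1 - v) n) = ∏ j ∈ range (n+1), Pfac v j := by
  have hnp : (0:ℝ) < (n:ℝ) := by exact_mod_cast hn
  rw [GammaSeq_div (1 - v/2) (1 + v/2) (by linarith) (by linarith) n hn,
      GammaSeq_div (1 + v) (1 - v) (by linarith) (by linarith) n hn]
  have e1 : (1 - v/2) - (1 + v/2) = -v := by ring
  have e2 : (1 + v) - (1 - v) = 2*v := by ring
  rw [e1, e2]
  have hN : ((n:ℝ) ^ (-v)) ^ 2 * (n:ℝ) ^ (2*v) = 1 := by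
    rw [sq, ← Real.rpow_add hnp, ← Real.rpow_add hnp,
      show -v + -v + 2*v = 0 by ring, Real.rpow_zero]
  have hprod : ∏ j ∈ range (n+1), Pfac v j =
      ((∏ j ∈ range (n+1), (1 + v/2 + (j:ℝ))) / (∏ j ∈ range (n+1), (1 - v/2 + (j:ℝ)))) ^ 2 *
      ((∏ j ∈ range (n+1), (1 - v + (j:ℝ))) / (∏ j ∈ range (n+1), (1 + v + (j:ℝ)))) := by
    rw [div_pow, ← Finset.prod_pow, ← Finset.prod_pow, div_mul_div_comm,
      ← Finset.prod_mul_distrib, ← Finset.prod_mul_distrib]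
    simp only [Pfac]
    rw [Finset.prod_div_distrib]
  rw [hprod, mul_pow]
  calc ((n:ℝ) ^ (-v)) ^ 2 *
        ((∏ j ∈ range (n+1), (1 + v/2 + (j:ℝ))) / (∏ j ∈ range (n+1), (1 - v/2 + (j:ℝ)))) ^ 2 *
        ((n:ℝ) ^ (2*v) *
        ((∏ j ∈ range (n+1), (1 - v + (j:ℝ))) / (∏ j ∈ range (n+1), (1 + v + (j:ℝ))))) =
      (((n:ℝ) ^ (-v)) ^ 2 * (n:ℝ) ^ (2*v)) *
        (((∏ j ∈ range (n+1), (1 + v/2 + (j:ℝ))) / (∏ j ∈ range (n+1), (1 - v/2 + (j:ℝ)))) ^ 2 *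
        ((∏ j ∈ range (n+1), (1 - v + (j:ℝ))) / (∏ j ∈ range (n+1), (1 + v + (j:ℝ))))) := by ring
    _ = _ := by rw [hN, one_mul]

lemma tendsto_prod_I (v : ℝ) (h0 : 0 < v) (h1 : v < 1) :
    Tendsto (fun n => ∏ j ∈ range (n+1), Pfac v j) atTop (nhds (I v)) := by
  have hg1 : Real.Gamma (1 + v/2) ≠ 0 := (Real.Gamma_pos_of_pos (by linarith)).ne'
  have hg2 : Real.Gamma (1 - v) ≠ 0 := (Real.Gamma_pos_of_pos (by linarith)).ne'
  have h := (((Real.GammaSeq_tendsto_Gamma (1 - v/2)).div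
      (Real.GammaSeq_tendsto_Gamma (1 + v/2)) hg1).pow 2).mul
    ((Real.GammaSeq_tendsto_Gamma (1 + v)).div (Real.GammaSeq_tendsto_Gamma (1 - v)) hg2)
  have heq : (fun n => (Real.GammaSeq (1 - v/2) n / Real.GammaSeq (1 + v/2) n) ^ 2 *
      (Real.GammaSeq (1 + v) n / Real.GammaSeq (1 - v) n)) =ᶠ[atTop]
      fun n => ∏ j ∈ range (n+1), Pfac v j := by
    filter_upwards [eventually_ge_atTop 1] with n hn
    exact prod_eq_GammaSeq v h0 h1 n hn
  exact h.congr' heq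

lemma I_le_one {v : ℝ} (h0 : 0 < v) (h1 : v < 1) : I v ≤ 1 := by
  refine le_of_tendsto (tendsto_prod_I v h0 h1) (Eventually.of_forall fun n => ?_)
  exact Finset.prod_le_one (fun j _ => Pfac_nonneg h0.le h1 j) (fun j _ => Pfac_le_one h0.le h1 j)

lemma I_ge {v : ℝ} (h0 : 0 < v) (h1 : v ≤ 1/2) : 1 - v ^ 3 ≤ I v := by
  have h1' : v < 1 := by linarith
  refine ge_of_tendsto (tendsto_prod_I v h0 h1') (Eventually.of_forall fun n => ?_)
  set f : ℕ → ℝ := fun j => 1 - Pfac v j with hf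
  have hf0 : ∀ j, 0 ≤ f j := fun j => by simp [hf]; linarith [Pfac_le_one h0.le h1' j]
  have hf1 : ∀ j, f j ≤ 1 := fun j => by simp [hf]; linarith [Pfac_nonneg h0.le h1' j]
  have hp : ∏ j ∈ range (n+1), Pfac v j = ∏ j ∈ range (n+1), (1 - f j) := by
    apply Finset.prod_congr rfl; intro j _; simp [hf]
  rw [hp]
  have hW := prod_one_sub_ge f hf0 hf1 (n+1)
  have hsum : ∑ j ∈ range (n+1), f j ≤ v ^ 3 := by
    have hle : ∀ j ∈ range (n+1), f j ≤ 8/13 * v^3 * (1 / (1 + (j:ℝ)) ^ 3) := by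
      intro j _
      have := Pfac_ge h0.le h1 j
      simp only [hf]
      have : 1 - Pfac v j ≤ 8 / 13 * v ^ 3 / (1 + (j : ℝ)) ^ 3 := by linarith
      calc 1 - Pfac v j ≤ 8 / 13 * v ^ 3 / (1 + (j : ℝ)) ^ 3 := this
        _ = 8/13 * v^3 * (1 / (1 + (j:ℝ)) ^ 3) := by ring
    calc ∑ j ∈ range (n+1), f j ≤ ∑ j ∈ range (n+1), 8/13 * v^3 * (1 / (1 + (j:ℝ)) ^ 3) :=
          Finset.sum_le_sum hle
      _ = 8/13 * v^3 * ∑ j ∈ range (n+1), (1:ℝ) / (1 + (j:ℝ)) ^ 3 := by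
          rw [Finset.mul_sum]
      _ ≤ 8/13 * v^3 * (3/2) := by
          apply mul_le_mul_of_nonneg_left (sum_cube_le (n+1)) (by positivity)
      _ ≤ v ^ 3 := by nlinarith [pow_nonneg h0.le 3]
  linarith

lemma I_pos {v : ℝ} (h1 : v < 1) (h2 : -1 < v) : 0 < I v := by
  have g1 : 0 < Real.Gamma (1 - v / 2) := Real.Gamma_pos_of_pos (by linarith)
  have g2 : 0 < Real.Gamma (1 + v / 2) := Real.Gamma_pos_of_pos (by linarith)
  have g3 : 0 < Real.Gamma (1 + v) := Real.Gamma_pos_of_pos (by linarith)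
  have g4 : 0 < Real.Gamma (1 - v) := Real.Gamma_pos_of_pos (by linarith)
  rw [I]; positivity

lemma F_eq_I {v : ℝ} (h1 : v < 1) (h2 : -1 < v) :
    F v = Real.exp (-(4 * Real.log 2) * v) * I v := by
  have g1 : 0 < Real.Gamma (1 / 2 + v / 2) := Real.Gamma_pos_of_pos (by linarith)
  have g2 : 0 < Real.Gamma (1 + v / 2) := Real.Gamma_pos_of_pos (by linarith)
  have g3 : 0 < Real.Gamma (1 / 2 - v / 2) := Real.Gamma_pos_of_pos (by linarith)
  have g4 : 0 < Real.Gamma (1 - v / 2) := Real.Gamma_pos_of_pos (by linarith)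
  have g5 : 0 < Real.Gamma (1 + v) := Real.Gamma_pos_of_pos (by linarith)
  have g6 : 0 < Real.Gamma (1 - v) := Real.Gamma_pos_of_pos (by linarith)
  have hsq : (0:ℝ) < Real.sqrt π := Real.sqrt_pos.mpr Real.pi_pos
  have d1 := Real.Gamma_mul_Gamma_add_half (1/2 + v/2)
  have d2 := Real.Gamma_mul_Gamma_add_half (1/2 - v/2)
  rw [show (1:ℝ) - 2*(1/2 + v/2) = -v by ring, show 2*((1:ℝ)/2 + v/2) = 1 + v by ring,
    show (1:ℝ)/2 + v/2 + 1/2 = 1 + v/2 by ring] at d1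
  rw [show (1:ℝ) - 2*(1/2 - v/2) = v by ring, show 2*((1:ℝ)/2 - v/2) = 1 - v by ring,
    show (1:ℝ)/2 - v/2 + 1/2 = 1 - v/2 by ring] at d2
  have hrp : ∀ t : ℝ, (2:ℝ) ^ (t:ℝ) = Real.exp (Real.log 2 * t) := fun t =>
    Real.rpow_def_of_pos two_pos t
  rw [hrp] at d1 d2
  have hE : Real.exp (-(4 * Real.log 2) * v) =
      (Real.exp (Real.log 2 * (-v)))^2 / (Real.exp (Real.log 2 * v))^2 := by
    rw [← Real.exp_nat_mul, ← Real.exp_nat_mul, ← Real.exp_sub]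
    congr 1; ring
  rw [F, I, hE]
  set A := Real.Gamma (1 / 2 + v / 2) with hA
  set B := Real.Gamma (1 + v / 2) with hB
  set C := Real.Gamma (1 / 2 - v / 2) with hC
  set D := Real.Gamma (1 - v / 2) with hD
  set P := Real.Gamma (1 + v) with hP
  set M := Real.Gamma (1 - v) with hM
  set Em := Real.exp (Real.log 2 * (-v)) with hEm
  set Ep := Real.exp (Real.log 2 * v) with hEp
  have hem : Em ≠ 0 := (Real.exp_pos _).ne'
  have hep : Ep ≠ 0 := (Real.exp_pos _).ne'
  have ha : A = P * Em * Real.sqrt π / B := by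
    rw [eq_div_iff g2.ne']; exact d1
  have hc : C = M * Ep * Real.sqrt π / D := by
    rw [eq_div_iff g4.ne']; exact d2
  rw [ha, hc]
  field_simp

lemma exp_cubic_ub {a : ℝ} (h0 : 0 ≤ a) (h1 : a ≤ 1) :
    Real.exp a ≤ 1 + a + a ^ 2 / 2 + a ^ 3 / 2 := by
  have h := Real.exp_bound' h0 h1 (n := 3) (by norm_num)
  have hs : (∑ m ∈ Finset.range 3, a ^ m / m.factorial) = 1 + a + a ^ 2 / 2 := by
    norm_num [Finset.sum_range_succ, Nat.factorial]
  rw [hs] at h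
  norm_num [Nat.factorial] at h
  nlinarith [pow_nonneg h0 3]

lemma exp_neg_ub {u : ℝ} (h0 : 0 ≤ u) (h1 : u ≤ 1) :
    Real.exp (-u) ≤ 1 - u + u ^ 2 / 2 + u ^ 3 / 4 := by
  have habs : |(-u)| ≤ 1 := by rw [abs_neg, abs_of_nonneg h0]; exact h1
  have h := Real.exp_bound habs (n := 3) (by norm_num)
  have hs : (∑ m ∈ Finset.range 3, (-u) ^ m / m.factorial) = 1 - u + u ^ 2 / 2 := by
    norm_num [Finset.sum_range_succ, Nat.factorial]
    ring
  rw [hs, abs_neg, abs_of_nonneg h0] at h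
  norm_num [Nat.factorial] at h
  have h' := (abs_sub_le_iff.mp h).1
  nlinarith [pow_nonneg h0 3]

lemma one_sub_mul_exp_le {a : ℝ} (h0 : 0 ≤ a) (h1 : a ≤ 1) :
    (1 - a) * Real.exp a ≤ 1 - a ^ 2 / 2 := by
  have h := exp_cubic_ub h0 h1
  have h2 : (1 - a) * Real.exp a ≤ (1 - a) * (1 + a + a ^ 2 / 2 + a ^ 3 / 2) :=
    mul_le_mul_of_nonneg_left h (by linarith)
  nlinarith [pow_nonneg h0 4]

end Aux

set_option maxHeartbeats 1000000 in
theorem t_minus_sq_lower_bound (g l : ℕ) (hg : 38 ≤ g) (hl : 2 ≤ l) (hlg : l ≤ g - 1)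
    (s x y z : ℝ) (hs : s = 1 / (g + 1)) (hx : x = l * s) (hy : y = (l + 1) * s)
    (hz : z = (l - 1) * s)
    (hrad : 0 ≤ ((l : ℝ) / (l - 1)) ^ 2 * (F x) ^ 2 * (I z) ^ 2 -
      ((l + 1 : ℝ) / (l - 1)) * L y * I z) :
    1 + 4 * Real.log 2 * l * x ≤
      (l : ℝ) / (l - 1) * F x * I z -
        Real.sqrt (((l : ℝ) / (l - 1)) ^ 2 * (F x) ^ 2 * (I z) ^ 2 -
          ((l + 1 : ℝ) / (l - 1)) * L y * I z) := by
  simp only [L] at hrad ⊢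
  set c := (l : ℝ) with hcdef
  have hc : (2:ℝ) ≤ c := by rw [hcdef]; exact_mod_cast hl
  have hc1p : (0:ℝ) < c - 1 := by linarith only [hc]
  have hgr : (39:ℝ) ≤ (g:ℝ) + 1 := by
    have h1 : (38:ℝ) ≤ (g:ℝ) := by exact_mod_cast hg
    linarith only [h1]
  have hlg' : c + 1 ≤ (g:ℝ) := by
    have h1 : l + 1 ≤ g := by omega
    rw [hcdef]; exact_mod_cast h1
  have hsp : 0 < s := by rw [hs]; positivity
  have hx0 : 0 < x := by rw [hx, hcdef]; positivity
  have hz0 : 0 < z := by rw [hz]; exact mul_pos hc1p hsp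
  have hzx : z ≤ x := by
    rw [hz, hx]
    exact mul_le_mul_of_nonneg_right (by linarith only) hsp.le
  have hxy : x < y := by
    rw [hy, hx]
    exact mul_lt_mul_of_pos_right (by linarith only) hsp
  have hy1 : y < 1 := by
    rw [hy, hs, mul_one_div, div_lt_one (by linarith only [hgr] : (0:ℝ) < (g:ℝ)+1)]
    linarith only [hlg']
  have hy0 : 0 < y := lt_trans hx0 hxy
  have hx1 : x < 1 := by linarith only [hxy, hy1]
  have hz1 : z < 1 := by linarith only [hzx, hx1]
  have hIy : 0 < I y := I_pos hy1 (by linarith only [hy0])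
  have hIz : 0 < I z := I_pos hz1 (by linarith only [hz0])
  have hIx : 0 < I x := I_pos hx1 (by linarith only [hx0])
  have hIyle : I y ≤ 1 := I_le_one hy0 hy1
  have hIzle : I z ≤ 1 := I_le_one hz0 hz1
  have hIxle : I x ≤ 1 := I_le_one hx0 hx1
  have hl2 : (2:ℝ)/3 ≤ Real.log 2 := by
    have h := Real.log_two_gt_d9; linarith only [h]
  have hl2' : Real.log 2 ≤ (7:ℝ)/10 := by
    have h := Real.log_two_lt_d9; linarith only [h]
  set a := 4 * Real.log 2 * x with hadef
  have ha0 : 0 ≤ a := by rw [hadef]; positivity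
  have hFxa : F x = Real.exp (-a) * I x := by
    rw [F_eq_I hx1 (by linarith only [hx0]), hadef]
    congr 2; ring
  -- Step A : consequence of hrad
  have hkey : c^2 - 1 ≤ c^2 * ((F x)^2 * (I z * I y)) := by
    have e : ((c-1)^2 * I y / I z) *
        ((c / (c - 1)) ^ 2 * F x ^ 2 * I z ^ 2 - (c + 1) / (c - 1) * (1 / I y) * I z) =
        c^2 * ((F x)^2 * (I z * I y)) - (c^2 - 1) := by
      field_simp
      ring
    have hmul : 0 ≤ (c-1)^2 * I y / I z := by positivity
    have h := mul_nonneg hmul hrad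
    rw [e] at h
    linarith only [h]
  -- Step B : smallness of x
  have hexp2 : (Real.exp (-a))^2 = Real.exp (-(2*a)) := by
    rw [sq, ← Real.exp_add]; congr 1; ring
  have hE1 : (F x)^2 ≤ Real.exp (-(2*a)) := by
    have h1 : (F x)^2 = Real.exp (-(2*a)) * (I x)^2 := by
      rw [hFxa, mul_pow, hexp2]
    have hIx2 : (I x)^2 ≤ 1 := pow_le_one₀ hIx.le hIxle
    rw [h1]
    calc Real.exp (-(2*a)) * (I x)^2 ≤ Real.exp (-(2*a)) * 1 :=
          mul_le_mul_of_nonneg_left hIx2 (Real.exp_pos _).le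
      _ = Real.exp (-(2*a)) := mul_one _
  have hkey2 : c^2 - 1 ≤ c^2 * Real.exp (-(2*a)) := by
    have hzy : I z * I y ≤ 1 := mul_le_one₀ hIzle hIy.le hIyle
    have s1 : (F x)^2 * (I z * I y) ≤ (F x)^2 :=
      mul_le_of_le_one_right (sq_nonneg (F x)) hzy
    have s2 : c^2 * ((F x)^2 * (I z * I y)) ≤ c^2 * Real.exp (-(2*a)) :=
      mul_le_mul_of_nonneg_left (s1.trans hE1) (by positivity)
    linarith only [hkey, s2]
  have hcp : (0:ℝ) < c^2 - 1 := by nlinarith only [hc]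
  have hc3 : (3:ℝ) ≤ c^2 - 1 := by nlinarith only [hc]
  have h5 : (c^2 - 1) * Real.exp (2*a) ≤ c^2 := by
    rw [Real.exp_neg] at hkey2
    have het : 0 < Real.exp (2*a) := Real.exp_pos _
    have h := mul_le_mul_of_nonneg_right hkey2 het.le
    rwa [mul_assoc, inv_mul_cancel₀ het.ne', mul_one] at h
  have h6 : 1 + 2*a ≤ Real.exp (2*a) := by
    have h := Real.add_one_le_exp (2*a); linarith only [h]
  have hu : 2*a*(c^2-1) ≤ 1 := by
    have h := mul_le_mul_of_nonneg_left h6 hcp.le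
    nlinarith only [h, h5]
  have hac : a*(c^2-1) ≤ 1/2 := by linarith only [hu]
  have ha6 : a ≤ 1/6 := by nlinarith only [hac, hc3, ha0]
  have hxa : x ≤ 3/8 * a := by
    rw [hadef]
    have h := mul_nonneg (by linarith only [hl2] : (0:ℝ) ≤ Real.log 2 - 2/3) hx0.le
    nlinarith only [h]
  have hz12 : z ≤ 1/2 := by linarith only [hzx, hxa, ha6]
  have hx12 : x ≤ 1/2 := by linarith only [hxa, ha6]
  have hIzge : 1 - z^3 ≤ I z := I_ge hz0 hz12
  have hIxge : 1 - x^3 ≤ I x := I_ge hx0 hx12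
  have hz3x : z^3 ≤ x^3 := pow_le_pow_left₀ hz0.le hzx 3
  have hz3one : z^3 ≤ 1 := pow_le_one₀ hz0.le (by linarith only [hz12])
  have hx3one : x^3 ≤ 1 := pow_le_one₀ hx0.le (by linarith only [hx12])
  -- Step D : lower bound for F x * I z
  have hFIz : 1 - a ≤ F x * I z := by
    have h7 : (1 - x^3) * (1 - z^3) ≤ I x * I z :=
      mul_le_mul hIxge hIzge (by linarith only [hz3one]) hIx.le
    have h8 : 1 - 2*x^3 ≤ (1 - x^3) * (1 - z^3) := by
      nlinarith only [hz3x, mul_nonneg (pow_nonneg hx0.le 3) (pow_nonneg hz0.le 3)]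
    have hx3a : x^3 ≤ (3/8*a)^3 := pow_le_pow_left₀ hx0.le hxa 3
    have ha3 : a^3 ≤ 1/6*a^2 := by
      nlinarith only [mul_nonneg (by linarith only [ha6] : (0:ℝ) ≤ 1/6 - a) (sq_nonneg a)]
    have h10 : 2*x^3 ≤ a^2/2 := by nlinarith only [hx3a, ha3]
    have h11 : (1 - a) * Real.exp a ≤ 1 - 2*x^3 := by
      have h := one_sub_mul_exp_le ha0 (by linarith only [ha6] : a ≤ 1)
      linarith only [h, h10]
    have h12 : (1 - a) ≤ Real.exp (-a) * (1 - 2*x^3) := by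
      have h := mul_le_mul_of_nonneg_right h11 (Real.exp_pos (-a)).le
      rw [mul_assoc, ← Real.exp_add, add_neg_cancel, Real.exp_zero, mul_one] at h
      linarith only [h]
    have h13 : Real.exp (-a) * (1 - 2*x^3) ≤ Real.exp (-a) * (I x * I z) :=
      mul_le_mul_of_nonneg_left (h8.trans h7) (Real.exp_pos _).le
    have h14 : F x * I z = Real.exp (-a) * (I x * I z) := by rw [hFxa]; ring
    rw [h14]
    linarith only [h12, h13]
  -- Step E : upper bound for the radicand
  have hB0 : 0 ≤ 1 - c^2*a := by nlinarith only [hu, ha6]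
  have p1 : (F x)^2 * (I z)^2 ≤ Real.exp (-(2*a)) := by
    have hIz2 : (I z)^2 ≤ 1 := pow_le_one₀ hIz.le hIzle
    have h := mul_le_mul hE1 hIz2 (sq_nonneg (I z)) (Real.exp_pos (-(2*a))).le
    rw [mul_one] at h
    exact h
  have p2 : 1 - z^3 ≤ 1 / I y * I z := by
    have h1y : 1 ≤ 1 / I y := by
      rw [le_div_iff₀ hIy]; rw [one_mul]; exact hIyle
    have h := mul_le_mul_of_nonneg_right h1y hIz.le
    rw [one_mul] at h
    linarith only [h, hIzge]
  have pexp : Real.exp (-(2*a)) ≤ 1 - 2*a + 2*a^2 + 2*a^3 := by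
    have h := exp_neg_ub (by linarith only [ha0] : (0:ℝ) ≤ 2*a)
      (by linarith only [ha6] : 2*a ≤ 1)
    nlinarith only [h]
  have key_num : c^2 * ((F x)^2 * (I z)^2) - (c^2-1) * (1 / I y * I z) ≤ (1 - c^2*a)^2 := by
    have q1 : c^2 * ((F x)^2 * (I z)^2) ≤ c^2 * Real.exp (-(2*a)) :=
      mul_le_mul_of_nonneg_left p1 (by positivity)
    have q2 : (c^2-1) * (1 - z^3) ≤ (c^2-1) * (1 / I y * I z) :=
      mul_le_mul_of_nonneg_left p2 hcp.le
    have q3 : c^2 * Real.exp (-(2*a)) ≤ c^2 * (1 - 2*a + 2*a^2 + 2*a^3) :=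
      mul_le_mul_of_nonneg_left pexp (by positivity)
    have hz3a : z^3 ≤ 27/512 * a^3 := by
      have h := pow_le_pow_left₀ hz0.le (hzx.trans hxa) 3
      nlinarith only [h]
    have t1 : 2*c^2*a^3 ≤ c^2*a^2/3 := by
      nlinarith only [mul_nonneg (mul_nonneg (sq_nonneg c) (sq_nonneg a))
        (by linarith only [ha6] : (0:ℝ) ≤ 1/6 - a)]
    have t2 : (c^2-1)*z^3 ≤ a^2/36 := by
      have t2a : (c^2-1)*z^3 ≤ (c^2-1)*(27/512*a^3) :=
        mul_le_mul_of_nonneg_left hz3a hcp.le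
      have t2c : 27/512*a^2*(a*(c^2-1)) ≤ 27/512*a^2*(1/2) :=
        mul_le_mul_of_nonneg_left hac (by positivity)
      nlinarith only [t2a, t2c]
    have t3 : 2*c^2*a^2 + c^2*a^2/3 + a^2/36 ≤ c^4*a^2 := by
      have hcc : 7/3*c^2 + 1/36 ≤ c^4 := by
        nlinarith only [sq_nonneg (c^2-4), sq_nonneg (c-2), hc]
      nlinarith only [mul_nonneg (by linarith only [hcc] : (0:ℝ) ≤ c^4 - 7/3*c^2 - 1/36)
        (sq_nonneg a)]
    nlinarith only [q1, q2, q3, t1, t2, t3]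
  have hre : (c / (c - 1)) ^ 2 * F x ^ 2 * I z ^ 2 - (c + 1) / (c - 1) * (1 / I y) * I z =
      (c^2 * ((F x)^2 * (I z)^2) - (c^2-1) * (1 / I y * I z)) / (c-1)^2 := by
    field_simp
    ring
  have hradle : (c / (c - 1)) ^ 2 * F x ^ 2 * I z ^ 2 - (c + 1) / (c - 1) * (1 / I y) * I z ≤
      ((1 - c^2*a)/(c-1))^2 := by
    rw [hre, div_pow]
    exact div_le_div_of_nonneg_right key_num (pow_pos hc1p 2).le
  have hBnn : 0 ≤ (1 - c^2*a)/(c-1) := div_nonneg hB0 hc1p.le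
  have hsqrt : Real.sqrt ((c / (c - 1)) ^ 2 * F x ^ 2 * I z ^ 2 -
      (c + 1) / (c - 1) * (1 / I y) * I z) ≤ (1 - c^2*a)/(c-1) := by
    have h := Real.sqrt_le_sqrt hradle
    rwa [Real.sqrt_sq hBnn] at h
  have hT1 : c/(c-1) * (1-a) ≤ c/(c-1) * F x * I z := by
    rw [mul_assoc]
    exact mul_le_mul_of_nonneg_left hFIz (by positivity)
  have hgoal_eq : c/(c-1) * (1-a) - (1 - c^2*a)/(c-1) = 1 + 4 * Real.log 2 * c * x := by
    rw [hadef]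
    field_simp
    ring
  linarith only [hT1, hsqrt, hgoal_eq]
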